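/- arXiv:2507.21392 — 2 statements merged into one kernel-verified Lean document; each statement's English description precedes it below -/
import Mathlib

section
/- Let θ ∈ [0,1], ε ∈ (−1,1). With α₂ = (θ+1)/2, α₁ = −θ, α₀ = (θ−1)/2 and the DLN weights β₀, β₁, β₂ (as functions of θ and ε), define a₁ = −√(θ(1−θ²))/(√2·(1+εθ)), a₂ = −((1−ε)/2)·a₁, a₀ = −((1+ε)/2)·a₁. Then for any real numbers v₋₁, v₀, v₁, the following algebraic identity holds: (α₂v₁ + α₁v₀ + α₀v₋₁)·(β₂v₁ + β₁v₀ + β₀v₋₁) = [(1+θ)/4·v₁² + (1−θ)/4·v₀²] − [(1+θ)/4·v₀² + (1−θ)/4·v₋₁²] + (a₂v₁ + a₁v₀ + a₀v₋₁)². -/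
/-- Scalar G-stability identity of the variable-step DLN method. -/
theorem stmt_5 (θ ε : ℝ) (hθ : θ ∈ Set.Icc (0 : ℝ) 1) (hε : ε ∈ Set.Ioo (-1 : ℝ) 1)
    (α₂ α₁ α₀ β₂ β₁ β₀ a₁ a₂ a₀ : ℝ)
    (hα₂ : α₂ = (θ + 1) / 2) (hα₁ : α₁ = -θ) (hα₀ : α₀ = (θ - 1) / 2)
    (hβ₂ : β₂ = (1 / 4) * (1 + (1 - θ ^ 2) / (1 + ε * θ) ^ 2
        + ε ^ 2 * (θ * (1 - θ ^ 2)) / (1 + ε * θ) ^ 2 + θ))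
    (hβ₁ : β₁ = (1 / 2) * (1 - (1 - θ ^ 2) / (1 + ε * θ) ^ 2))
    (hβ₀ : β₀ = (1 / 4) * (1 + (1 - θ ^ 2) / (1 + ε * θ) ^ 2
        - ε ^ 2 * (θ * (1 - θ ^ 2)) / (1 + ε * θ) ^ 2 - θ))
    (ha₁ : a₁ = -Real.sqrt (θ * (1 - θ ^ 2)) / (Real.sqrt 2 * (1 + ε * θ)))
    (ha₂ : a₂ = -((1 - ε) / 2) * a₁) (ha₀ : a₀ = -((1 + ε) / 2) * a₁)
    (vm1 v₀ v₁ : ℝ) :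
    (α₂ * v₁ + α₁ * v₀ + α₀ * vm1) * (β₂ * v₁ + β₁ * v₀ + β₀ * vm1) =
      ((1 + θ) / 4 * v₁ ^ 2 + (1 - θ) / 4 * v₀ ^ 2)
        - ((1 + θ) / 4 * v₀ ^ 2 + (1 - θ) / 4 * vm1 ^ 2)
        + (a₂ * v₁ + a₁ * v₀ + a₀ * vm1) ^ 2 := by
  obtain ⟨hθ0, hθ1⟩ := hθ
  obtain ⟨hε0, hε1⟩ := hε
  have hd : (1 : ℝ) + ε * θ > 0 := by nlinarith
  have hd' : (1 : ℝ) + ε * θ ≠ 0 := ne_of_gt hd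
  have hnn : (0:ℝ) ≤ θ * (1 - θ ^ 2) := by nlinarith
  have hs : Real.sqrt (θ * (1 - θ ^ 2)) ^ 2 = θ * (1 - θ ^ 2) := Real.sq_sqrt hnn
  have h2 : Real.sqrt 2 ^ 2 = 2 := Real.sq_sqrt (by norm_num)
  have h2' : Real.sqrt 2 ≠ 0 := by positivity
  have ha1sq : a₁ ^ 2 = θ * (1 - θ ^ 2) / (2 * (1 + ε * θ) ^ 2) := by
    rw [ha₁, div_pow, neg_pow, mul_pow, h2, hs]
    ring
  have key : (a₂ * v₁ + a₁ * v₀ + a₀ * vm1) ^ 2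
      = a₁ ^ 2 * (-((1 - ε) / 2) * v₁ + v₀ + -((1 + ε) / 2) * vm1) ^ 2 := by
    rw [ha₂, ha₀]; ring
  rw [key, ha1sq, hα₂, hα₁, hα₀, hβ₂, hβ₁, hβ₀]
  have hinv : ((1 + ε * θ) ^ 2)⁻¹ * (1 + ε * θ) ^ 2 = 1 := inv_mul_cancel₀ (pow_ne_zero 2 hd')
  have h2D : θ * (1 - θ ^ 2) / (2 * (1 + ε * θ) ^ 2) = θ * (1 - θ ^ 2) / 2 / (1 + ε * θ) ^ 2 := by
    rw [div_div]
  rw [h2D]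
  linear_combination (-(((θ + 1) / 2 * v₁ - θ * v₀ + (θ - 1) / 2 * vm1) * ((1 + θ) / 4 * v₁ + 1 / 2 * v₀ + (1 - θ) / 4 * vm1)
    - ((1 + θ) / 4 * v₁ ^ 2 + (1 - θ) / 4 * v₀ ^ 2 - (1 + θ) / 4 * v₀ ^ 2 - (1 - θ) / 4 * vm1 ^ 2))) * hinv
end

section
/- Let H be a real inner product space, θ ∈ [0,1], ε ∈ (−1,1), with DLN coefficients α₂=(θ+1)/2, α₁=−θ, α₀=(θ−1)/2, weights β₂, β₁, β₀ (the DLN weights in θ, ε), and a₀, a₁, a₂ as in the G-stability kernel. Then for any u₋₁, u₀, u₁ ∈ H: ⟪α₂u₁+α₁u₀+α₀u₋₁, β₂u₁+β₁u₀+β₀u₋₁⟫ = ((1+θ)/4)‖u₁‖² + ((1−θ)/4)‖u₀‖² − ((1+θ)/4)‖u₀‖² − ((1−θ)/4)‖u₋₁‖² + ‖a₂u₁+a₁u₀+a₀u₋₁‖². -/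
/-- G-stability identity of the variable-step DLN method in a real inner product space. -/
theorem stmt_7 {H : Type*} [NormedAddCommGroup H] [InnerProductSpace ℝ H]
    (θ ε : ℝ) (hθ : θ ∈ Set.Icc (0 : ℝ) 1) (hε : ε ∈ Set.Ioo (-1 : ℝ) 1)
    (α₂ α₁ α₀ β₂ β₁ β₀ a₁ a₂ a₀ : ℝ)
    (hα₂ : α₂ = (θ + 1) / 2) (hα₁ : α₁ = -θ) (hα₀ : α₀ = (θ - 1) / 2)
    (hβ₂ : β₂ = (1 / 4) * (1 + (1 - θ ^ 2) / (1 + ε * θ) ^ 2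
        + ε ^ 2 * (θ * (1 - θ ^ 2)) / (1 + ε * θ) ^ 2 + θ))
    (hβ₁ : β₁ = (1 / 2) * (1 - (1 - θ ^ 2) / (1 + ε * θ) ^ 2))
    (hβ₀ : β₀ = (1 / 4) * (1 + (1 - θ ^ 2) / (1 + ε * θ) ^ 2
        - ε ^ 2 * (θ * (1 - θ ^ 2)) / (1 + ε * θ) ^ 2 - θ))
    (ha₁ : a₁ = -Real.sqrt (θ * (1 - θ ^ 2)) / (Real.sqrt 2 * (1 + ε * θ)))
    (ha₂ : a₂ = -((1 - ε) / 2) * a₁) (ha₀ : a₀ = -((1 + ε) / 2) * a₁)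
    (um1 u₀ u₁ : H) :
    (inner ℝ (α₂ • u₁ + α₁ • u₀ + α₀ • um1) (β₂ • u₁ + β₁ • u₀ + β₀ • um1) : ℝ) =
      ((1 + θ) / 4) * ‖u₁‖ ^ 2 + ((1 - θ) / 4) * ‖u₀‖ ^ 2
        - ((1 + θ) / 4) * ‖u₀‖ ^ 2 - ((1 - θ) / 4) * ‖um1‖ ^ 2
        + ‖a₂ • u₁ + a₁ • u₀ + a₀ • um1‖ ^ 2 := by
  obtain ⟨hθ0, hθ1⟩ := hθ
  obtain ⟨hε0, hε1⟩ := hε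
  have hA : (0:ℝ) < 1 + ε * θ := by nlinarith
  have key : a₁ ^ 2 = θ * (1 - θ ^ 2) / (1 + ε * θ) ^ 2 / 2 := by
    have h1 : Real.sqrt (θ * (1 - θ ^ 2)) ^ 2 = θ * (1 - θ ^ 2) :=
      Real.sq_sqrt (by nlinarith)
    have h2 : Real.sqrt 2 ^ 2 = 2 := Real.sq_sqrt (by norm_num)
    rw [ha₁, div_pow, neg_pow, mul_pow, h1, h2, div_div, mul_comm ((1 + ε * θ) ^ 2) 2]
    norm_num
  subst ha₂ ha₀ hα₂ hα₁ hα₀ hβ₂ hβ₁ hβ₀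
  have e11 : ‖u₁‖ ^ 2 = inner ℝ u₁ u₁ := (real_inner_self_eq_norm_sq u₁).symm
  have e00 : ‖u₀‖ ^ 2 = inner ℝ u₀ u₀ := (real_inner_self_eq_norm_sq u₀).symm
  have emm : ‖um1‖ ^ 2 = inner ℝ um1 um1 := (real_inner_self_eq_norm_sq um1).symm
  have eN : ‖(-((1 - ε) / 2) * a₁) • u₁ + a₁ • u₀ + (-((1 + ε) / 2) * a₁) • um1‖ ^ 2
      = inner ℝ ((-((1 - ε) / 2) * a₁) • u₁ + a₁ • u₀ + (-((1 + ε) / 2) * a₁) • um1)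
          ((-((1 - ε) / 2) * a₁) • u₁ + a₁ • u₀ + (-((1 + ε) / 2) * a₁) • um1) :=
    (real_inner_self_eq_norm_sq _).symm
  rw [e11, e00, emm, eN]
  simp only [inner_add_left, inner_add_right, real_inner_smul_left, real_inner_smul_right]
  simp only [real_inner_comm u₀ u₁, real_inner_comm um1 u₁, real_inner_comm um1 u₀]
  set p11 : ℝ := inner ℝ u₁ u₁
  set p00 : ℝ := inner ℝ u₀ u₀
  set pmm : ℝ := inner ℝ um1 um1
  set p10 : ℝ := inner ℝ u₀ u₁
  set p1m : ℝ := inner ℝ um1 u₁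
  set p0m : ℝ := inner ℝ um1 u₀
  have hA' : (1 + ε * θ) ≠ 0 := ne_of_gt hA
  have hI : (1 + ε * θ) ^ 2 * ((1 + ε * θ) ^ 2)⁻¹ = 1 :=
    mul_inv_cancel₀ (pow_ne_zero 2 hA')
  linear_combination -(((1 - ε) / 2) ^ 2 * p11 + p00 + ((1 + ε) / 2) ^ 2 * pmm
      - (1 - ε) * p10 + (1 - ε ^ 2) / 2 * p1m - (1 + ε) * p0m) * key
    + ((1 - θ ^ 2) / 8 * (p11 - 2 * p10 + 2 * p0m - pmm)) * hI
end
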